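/- The road R = {(x,y,0) ∈ ℝ³ : (x−1)² + (y−1)² = 4/9, x ≤ 1, y ≤ 1} is cone-friendly: the radial projection p ↦ p/‖p‖ is injective on R; equivalently, every ray emanating from the origin intersects R in at most one point. -/

import Mathlib

/-- The road `R = {(x,y,0) : (x-1)² + (y-1)² = 4/9, x ≤ 1, y ≤ 1}`,
as a subset of Euclidean `ℝ³`. -/
def road : Set (EuclideanSpace ℝ (Fin 3)) :=
  {p | (p 0 - 1)^2 + (p 1 - 1)^2 = (2/3)^2 ∧ p 0 ≤ 1 ∧ p 1 ≤ 1 ∧ p 2 = 0}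

lemma road_key {x y a b : ℝ}
    (hp : (x - 1)^2 + (y - 1)^2 = (2/3:ℝ)^2)
    (hq : (a - 1)^2 + (b - 1)^2 = (2/3:ℝ)^2)
    (hx : x ≤ 1) (hy : y ≤ 1) (ha : a ≤ 1) (hb : b ≤ 1)
    (hax : x ≤ a) (hby : y ≤ b) : a = x ∧ b = y := by
  have h1 : (a - 1)^2 ≤ (x - 1)^2 := by nlinarith
  have h2 : (b - 1)^2 ≤ (y - 1)^2 := by nlinarith
  have e1 : (a - 1)^2 = (x - 1)^2 := by nlinarith
  have e2 : (b - 1)^2 = (y - 1)^2 := by nlinarith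
  constructor
  · nlinarith [sq_nonneg (a - x)]
  · nlinarith [sq_nonneg (b - y)]

lemma road_pos {p : EuclideanSpace ℝ (Fin 3)} (hp : p ∈ road) : (1:ℝ)/3 ≤ p 0 ∧ (1:ℝ)/3 ≤ p 1 := by
  obtain ⟨hc, hx, hy, -⟩ := hp
  constructor <;> nlinarith [sq_nonneg (p 0 - 1), sq_nonneg (p 1 - 1)]

lemma road_ray {p q : EuclideanSpace ℝ (Fin 3)} (hp : p ∈ road) (hq : q ∈ road)
    {t : ℝ} (ht : 0 < t) (hqt : q = t • p) : q = p := by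
  obtain ⟨hpc, hpx, hpy, hpz⟩ := hp
  obtain ⟨hqc, hqx, hqy, hqz⟩ := hq
  obtain ⟨hp0, hp1⟩ := road_pos ⟨hpc, hpx, hpy, hpz⟩
  have hq0 : q 0 = t * p 0 := by rw [hqt]; rfl
  have hq1 : q 1 = t * p 1 := by rw [hqt]; rfl
  have hcoord : q 0 = p 0 ∧ q 1 = p 1 := by
    rcases le_or_gt 1 t with h | h
    · exact road_key hpc hqc hpx hpy hqx hqy
        (by nlinarith) (by nlinarith)
    · have := road_key hqc hpc hqx hqy hpx hpy
        (by nlinarith) (by nlinarith)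
      exact ⟨this.1.symm, this.2.symm⟩
  ext i
  fin_cases i
  · exact hcoord.1
  · exact hcoord.2
  · show q 2 = p 2
    rw [hqz, hpz]

/-- the road `R` is cone-friendly: the radial projection
`p ↦ p/‖p‖` is injective on `R`; equivalently, every ray emanating from the
origin intersects `R` in at most one point. -/
theorem road_coneFriendly :
    Set.InjOn (fun p : EuclideanSpace ℝ (Fin 3) => ‖p‖⁻¹ • p) road ∧
    ∀ p ∈ road, ∀ q ∈ road, ∀ t : ℝ, 0 < t → q = t • p → q = p := by
  constructor
  · intro p hp q hq h
    have hp0 := (road_pos hp).1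
    have hq0 := (road_pos hq).1
    have hpne : p ≠ 0 := by
      intro h0
      have : p 0 = 0 := by rw [h0]; rfl
      linarith
    have hqne : q ≠ 0 := by
      intro h0
      have : q 0 = 0 := by rw [h0]; rfl
      linarith
    have hpn : (0:ℝ) < ‖p‖ := norm_pos_iff.mpr hpne
    have hqn : (0:ℝ) < ‖q‖ := norm_pos_iff.mpr hqne
    have hq' : q = (‖q‖ * ‖p‖⁻¹) • p := by
      have := congrArg (fun v : EuclideanSpace ℝ (Fin 3) => ‖q‖ • v) h
      simp only [smul_smul] at this
      rw [mul_inv_cancel₀ (ne_of_gt hqn), one_smul] at this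
      exact this.symm
    exact (road_ray hp hq (by positivity) hq').symm
  · intro p hp q hq t ht hqt
    exact road_ray hp hq ht hqt
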